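/- If r_1,…,r_n are generators of 𝕊, then ∑_{j=1}^n h(r_j) = Nn + n(n−1)/2. -/

import Mathlib

open Polynomial Matrix

/-- The height of an `n`-dimensional vector polynomial. -/
noncomputable def vheight (n : ℕ) (r : Fin n → Polynomial ℂ) : WithBot ℕ :=
  Finset.univ.sup fun j : Fin n => n • (r j).degree + ((j : ℕ) : WithBot ℕ)

/-- The class `𝓜(n,N)` of band symmetric matrices with degeneration indices `m`. -/
structure MatrixClassM (n N : ℕ) (A : Matrix (Fin N) (Fin N) ℝ) (m : ℕ → ℕ) : Prop where
  symm : A.IsSymm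
  band : ∀ k l : Fin N, (n : ℤ) < |(k : ℤ) - (l : ℤ)| → A k l = 0
  m_zero : m 0 = 0
  m_last : m n = N
  m_mono : ∀ j < n, m j < m (j + 1)
  m_one : 1 < m 1
  m_le : ∀ j, 1 ≤ j → j ≤ n → m j ≤ N - n + j
  d_pos : ∀ j < n, ∀ k l : Fin N, (l : ℕ) = (k : ℕ) + (n - j) →
      m j < (k : ℕ) + 1 → (k : ℕ) + 1 < m (j + 1) → 0 < A l k
  d_zero : ∀ j < n, ∀ k l : Fin N, (l : ℕ) = (k : ℕ) + (n - j) →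
      m (j + 1) ≤ (k : ℕ) + 1 → (k : ℕ) + 1 ≤ N - n + j → A l k = 0

/-- The rank-one jump matrix `σ_k`. -/
def sigmaJump {n N : ℕ} (αc : Fin N → Fin n → ℂ) (k : Fin N) :
    Matrix (Fin n) (Fin n) ℂ :=
  Matrix.of fun i j => (starRingEnd ℂ) (αc k i) * αc k j

/-- The inner product `⟨r,s⟩_{L²(σ)}` for vector polynomials. -/
noncomputable def L2inner {n N : ℕ} (x : Fin N → ℝ)
    (σ : Fin N → Matrix (Fin n) (Fin n) ℂ) (r s : Fin n → Polynomial ℂ) : ℂ :=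
  ∑ k, ∑ i, ∑ j,
    (starRingEnd ℂ) ((r i).eval ((x k : ℂ))) * σ k i j * (s j).eval ((x k : ℂ))

/-- The interpolation set `𝕊`. -/
def interpSet {n N : ℕ} (z : Fin N → ℂ) (α : Fin N → Fin n → ℂ) :
    Set (Fin n → Polynomial ℂ) :=
  {r | ∀ k, ∑ j, α k j * (r j).eval (z k) = 0}

/-- `𝕄(r_1) + ⋯ + 𝕄(r_m)`. -/
def polySpan {n m : ℕ} (r : Fin m → Fin n → Polynomial ℂ) :
    Set (Fin n → Polynomial ℂ) :=
  {s | ∃ c : Fin m → Polynomial ℂ, s = fun jj => ∑ i, c i * r i jj}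

/-- `𝕄(r_1) + ⋯ + 𝕄(r_{j-1})`. -/
def prevSpan {n : ℕ} (r : Fin n → Fin n → Polynomial ℂ) (j : Fin n) :
    Set (Fin n → Polynomial ℂ) :=
  {s | ∃ c : Fin n → Polynomial ℂ,
      s = fun jj => ∑ i ∈ Finset.univ.filter (fun i => i < j), c i * r i jj}

/-- `r` is a sequence of generators of `S`. -/
def IsGenSeq {n : ℕ} (S : Set (Fin n → Polynomial ℂ))
    (r : Fin n → Fin n → Polynomial ℂ) : Prop :=
  ∀ j : Fin n, r j ≠ 0 ∧ r j ∈ S \ prevSpan r j ∧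
    ∀ s ∈ S \ prevSpan r j, s ≠ 0 → vheight n (r j) ≤ vheight n s

namespace St8

variable {n : ℕ}

lemma vheight_def (n : ℕ) (r : Fin n → Polynomial ℂ) :
    vheight n r = Finset.univ.sup (fun j : Fin n => n • (r j).degree + ((j : ℕ) : WithBot ℕ)) :=
  rfl

lemma smul_bot (hn : 0 < n) : n • (⊥ : WithBot ℕ) = ⊥ := by
  rw [nsmul_eq_mul, WithBot.mul_bot]
  exact_mod_cast hn.ne'

lemma term_eq {p : Polynomial ℂ} (hp : p ≠ 0) (j : ℕ) :
    n • p.degree + ((j : ℕ) : WithBot ℕ) = ((n * p.natDegree + j : ℕ) : WithBot ℕ) := by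
  rw [degree_eq_natDegree hp, nsmul_eq_mul]; push_cast; ring

lemma term_bot (hn : 0 < n) (j : ℕ) :
    n • (0 : Polynomial ℂ).degree + ((j : ℕ) : WithBot ℕ) = ⊥ := by
  rw [degree_zero, smul_bot hn, WithBot.bot_add]

lemma term_mono {x y : WithBot ℕ} (h : x ≤ y) (j : ℕ) :
    n • x + ((j : ℕ) : WithBot ℕ) ≤ n • y + ((j : ℕ) : WithBot ℕ) := by
  rw [nsmul_eq_mul, nsmul_eq_mul]
  gcongr

lemma coe_eq_cast (e : ℕ) : (WithBot.some e) = ((e : ℕ) : WithBot ℕ) := rfl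

lemma term_strict_mono (hn : 0 < n) {x : WithBot ℕ} {d : ℕ} (h : x < (d : WithBot ℕ)) (j : ℕ) :
    n • x + ((j : ℕ) : WithBot ℕ) < ((n * d + j : ℕ) : WithBot ℕ) := by
  cases x with
  | bot => rw [smul_bot hn, WithBot.bot_add]; exact WithBot.bot_lt_coe _
  | coe e =>
      rw [coe_eq_cast] at h ⊢
      have he : e < d := by exact_mod_cast h
      have h2 : n • ((e : ℕ) : WithBot ℕ) + ((j : ℕ) : WithBot ℕ)
          = ((n * e + j : ℕ) : WithBot ℕ) := by
        rw [nsmul_eq_mul]; push_cast; ring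
      rw [h2]
      have hlt : n * e + j < n * d + j := by
        have : n * e < n * d := (Nat.mul_lt_mul_left hn).mpr he
        omega
      exact_mod_cast hlt

lemma vheight_eq_bot_iff (hn : 0 < n) (r : Fin n → Polynomial ℂ) :
    vheight n r = ⊥ ↔ r = 0 := by
  rw [vheight_def, Finset.sup_eq_bot_iff]
  constructor
  · intro h
    funext j
    have := h j (Finset.mem_univ j)
    by_contra hj
    rw [term_eq hj] at this
    exact (WithBot.coe_ne_bot) this
  · intro h j _
    rw [h]
    exact term_bot hn j

lemma term_le_vheight (r : Fin n → Polynomial ℂ) (j : Fin n) :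
    n • (r j).degree + ((j : ℕ) : WithBot ℕ) ≤ vheight n r := by
  rw [vheight_def]
  exact Finset.le_sup (f := fun j : Fin n => n • (r j).degree + ((j : ℕ) : WithBot ℕ))
    (Finset.mem_univ j)

lemma vheight_le_iff (r : Fin n → Polynomial ℂ) (b : WithBot ℕ) :
    vheight n r ≤ b ↔ ∀ j : Fin n, n • (r j).degree + ((j : ℕ) : WithBot ℕ) ≤ b := by
  constructor
  · intro h j
    exact le_trans (term_le_vheight r j) h
  · intro h
    rw [vheight_def]
    exact Finset.sup_le fun j _ => h j

lemma decomp_unique (hn : 0 < n) {d₁ d₂ j₁ j₂ : ℕ} (h₁ : j₁ < n) (h₂ : j₂ < n)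
    (h : n * d₁ + j₁ = n * d₂ + j₂) : d₁ = d₂ ∧ j₁ = j₂ := by
  have hm : (n * d₁ + j₁) % n = (n * d₂ + j₂) % n := by rw [h]
  rw [Nat.mul_add_mod, Nat.mul_add_mod, Nat.mod_eq_of_lt h₁, Nat.mod_eq_of_lt h₂] at hm
  subst hm
  have : n * d₁ = n * d₂ := by omega
  exact ⟨Nat.eq_of_mul_eq_mul_left hn this, rfl⟩

lemma exists_leading (hn : 0 < n) {r : Fin n → Polynomial ℂ} (hr : r ≠ 0) :
    ∃ j₀ : Fin n, r j₀ ≠ 0 ∧ vheight n r = ((n * (r j₀).natDegree + (j₀:ℕ) : ℕ) : WithBot ℕ) := by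
  have : NeZero n := ⟨hn.ne'⟩
  have hne : (Finset.univ : Finset (Fin n)).Nonempty := Finset.univ_nonempty
  obtain ⟨j₀, -, hj₀⟩ := Finset.exists_mem_eq_sup Finset.univ hne
    (fun j : Fin n => n • (r j).degree + ((j : ℕ) : WithBot ℕ))
  have hbot : vheight n r ≠ ⊥ := by
    rw [Ne, vheight_eq_bot_iff hn]; exact hr
  have hrj : r j₀ ≠ 0 := by
    intro h0
    apply hbot
    rw [vheight_def, hj₀, h0, term_bot hn]
  refine ⟨j₀, hrj, ?_⟩
  rw [vheight_def, hj₀, term_eq hrj]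

lemma vheight_add_le (r s : Fin n → Polynomial ℂ) :
    vheight n (fun j => r j + s j) ≤ max (vheight n r) (vheight n s) := by
  rw [vheight_le_iff]
  intro j
  have hd : (r j + s j).degree ≤ max (r j).degree (s j).degree := degree_add_le _ _
  refine le_trans (term_mono hd _) ?_
  rcases max_cases (r j).degree (s j).degree with ⟨h1, -⟩ | ⟨h1, -⟩ <;> rw [h1]
  · exact le_trans (term_le_vheight r j) (le_max_left _ _)
  · exact le_trans (term_le_vheight s j) (le_max_right _ _)

lemma vheight_neg (r : Fin n → Polynomial ℂ) :
    vheight n (fun j => -(r j)) = vheight n r := by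
  rw [vheight_def, vheight_def]
  congr 1
  funext j
  rw [degree_neg]

lemma vheight_add_eq_left (hn : 0 < n) {r s : Fin n → Polynomial ℂ}
    (h : vheight n s < vheight n r) :
    vheight n (fun j => r j + s j) = vheight n r := by
  refine le_antisymm (le_trans (vheight_add_le r s) (max_le le_rfl h.le)) ?_
  by_contra hc
  push_neg at hc
  have h2 : vheight n r ≤ max (vheight n (fun j => r j + s j)) (vheight n s) := by
    have := vheight_add_le (fun j => r j + s j) (fun j => -(s j))
    simp only [add_neg_cancel_right] at this
    rw [vheight_neg] at this
    exact this
  rcases max_cases (vheight n (fun j => r j + s j)) (vheight n s) with ⟨h1, -⟩ | ⟨h1, -⟩ <;>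
    rw [h1] at h2
  · exact absurd h2 (not_le.mpr hc)
  · exact absurd h2 (not_le.mpr h)

lemma sup_const_add (hn : 0 < n) (a : ℕ) (f : Fin n → WithBot ℕ) :
    Finset.univ.sup (fun j : Fin n => ((a : ℕ) : WithBot ℕ) + f j)
      = ((a : ℕ) : WithBot ℕ) + Finset.univ.sup f := by
  have : NeZero n := ⟨hn.ne'⟩
  apply le_antisymm
  · exact Finset.sup_le fun j _ => add_le_add le_rfl (Finset.le_sup (Finset.mem_univ j))
  · obtain ⟨j₀, -, hj₀⟩ := Finset.exists_mem_eq_sup Finset.univ Finset.univ_nonempty f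
    rw [hj₀]
    exact Finset.le_sup (f := fun j : Fin n => ((a : ℕ) : WithBot ℕ) + f j) (Finset.mem_univ j₀)

/-- vheight of a scalar polynomial multiple -/
lemma vheight_polymul (hn : 0 < n) {c : Polynomial ℂ} (hc : c ≠ 0) (r : Fin n → Polynomial ℂ) :
    vheight n (fun j => c * r j) = ((n * c.natDegree : ℕ) : WithBot ℕ) + vheight n r := by
  rw [vheight_def, vheight_def, ← sup_const_add hn]
  congr 1
  funext j
  by_cases hrj : r j = 0
  · rw [hrj, mul_zero, term_bot hn, WithBot.add_bot]
  · rw [term_eq (mul_ne_zero hc hrj), term_eq hrj, natDegree_mul hc hrj]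
    push_cast
    ring

/-- Key cancellation lemma -/
lemma cancel (hn : 0 < n) {r s : Fin n → Polynomial ℂ} (hrne : r ≠ 0) (hsne : s ≠ 0)
    (h : vheight n s = vheight n r) :
    ∃ cc : ℂ, cc ≠ 0 ∧ vheight n (fun j => r j - Polynomial.C cc * s j) < vheight n r := by
  obtain ⟨j₀, hrj₀, hv₀⟩ := exists_leading hn hrne
  obtain ⟨j₁, hsj₁, hv₁⟩ := exists_leading hn hsne
  have heq : n * (s j₁).natDegree + (j₁ : ℕ) = n * (r j₀).natDegree + (j₀ : ℕ) := by
    have := hv₁.symm.trans (h.trans hv₀)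
    exact_mod_cast this
  obtain ⟨hdeq, hjeq⟩ := decomp_unique hn j₁.isLt j₀.isLt heq
  have hjeq' : j₁ = j₀ := Fin.ext hjeq
  rw [hjeq'] at hsj₁ hdeq
  set cc : ℂ := (r j₀).leadingCoeff / (s j₀).leadingCoeff with hcc
  have hlc : (s j₀).leadingCoeff ≠ 0 := leadingCoeff_ne_zero.mpr hsj₁
  have hccne : cc ≠ 0 := div_ne_zero (leadingCoeff_ne_zero.mpr hrj₀) hlc
  refine ⟨cc, hccne, ?_⟩
  rw [hv₀]
  have hbot : (⊥ : WithBot ℕ) < ((n * (r j₀).natDegree + (j₀:ℕ) : ℕ) : WithBot ℕ) :=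
    WithBot.bot_lt_coe _
  rw [vheight_def]
  rw [Finset.sup_lt_iff hbot]
  intro j _
  by_cases hj : j = j₀
  · subst hj
    have hdeg : (r j).degree = (Polynomial.C cc * s j).degree := by
      rw [degree_C_mul hccne, degree_eq_natDegree hrj₀, degree_eq_natDegree hsj₁, hdeq]
    have hlc2 : (r j).leadingCoeff = (Polynomial.C cc * s j).leadingCoeff := by
      rw [leadingCoeff_mul, leadingCoeff_C, hcc, div_mul_cancel₀ _ hlc]
    have := degree_sub_lt hdeg hrj₀ hlc2
    rw [degree_eq_natDegree hrj₀] at this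
    exact term_strict_mono hn (by exact_mod_cast this) _
  · have hdle : (r j - Polynomial.C cc * s j).degree ≤ max (r j).degree (s j).degree := by
      refine le_trans (degree_sub_le _ _) ?_
      rw [degree_C_mul hccne]
    have hr_lt : n • (r j).degree + ((j:ℕ) : WithBot ℕ)
        < ((n * (r j₀).natDegree + (j₀:ℕ) : ℕ) : WithBot ℕ) := by
      refine lt_of_le_of_ne (hv₀ ▸ term_le_vheight r j) ?_
      by_cases hrj : r j = 0
      · rw [hrj, term_bot hn]; exact fun hb => (WithBot.coe_ne_bot hb.symm)
      · rw [term_eq hrj]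
        intro hb
        have : n * (r j).natDegree + (j:ℕ) = n * (r j₀).natDegree + (j₀:ℕ) := by
          exact_mod_cast hb
        exact hj (Fin.ext (decomp_unique hn j.isLt j₀.isLt this).2)
    have hs_lt : n • (s j).degree + ((j:ℕ) : WithBot ℕ)
        < ((n * (r j₀).natDegree + (j₀:ℕ) : ℕ) : WithBot ℕ) := by
      have hvs : vheight n s = ((n * (r j₀).natDegree + (j₀:ℕ) : ℕ) : WithBot ℕ) := h.trans hv₀
      refine lt_of_le_of_ne (hvs ▸ term_le_vheight s j) ?_
      by_cases hsj : s j = 0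
      · rw [hsj, term_bot hn]; exact fun hb => (WithBot.coe_ne_bot hb.symm)
      · rw [term_eq hsj]
        intro hb
        have : n * (s j).natDegree + (j:ℕ) = n * (r j₀).natDegree + (j₀:ℕ) := by
          exact_mod_cast hb
        exact hj (Fin.ext (decomp_unique hn j.isLt j₀.isLt this).2)
    refine lt_of_le_of_lt (term_mono hdle _) ?_
    rcases max_cases (r j).degree (s j).degree with ⟨h1, -⟩ | ⟨h1, -⟩ <;> rw [h1]
    · exact hr_lt
    · exact hs_lt

lemma vheight_finsum_le (hn : 0 < n) {ι : Type*} (s : Finset ι)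
    (f : ι → Fin n → Polynomial ℂ) :
    vheight n (fun jj => ∑ i ∈ s, f i jj) ≤ s.sup (fun i => vheight n (f i)) := by
  induction s using Finset.cons_induction with
  | empty =>
      simp only [Finset.sum_empty, Finset.sup_empty]
      exact le_of_eq ((vheight_eq_bot_iff hn _).mpr rfl)
  | cons a s ha ih =>
      simp only [Finset.sum_cons, Finset.sup_cons]
      exact le_trans (vheight_add_le (f a) (fun jj => ∑ i ∈ s, f i jj)) (max_le_max le_rfl ih)

lemma combo_eq (hn : 0 < n) {r : Fin n → Fin n → Polynomial ℂ} {hnat : Fin n → ℕ}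
    (hrne : ∀ j, r j ≠ 0) (hv : ∀ j, vheight n (r j) = ((hnat j : ℕ) : WithBot ℕ))
    (hres : ∀ i j : Fin n, hnat i % n = hnat j % n → i = j)
    (c : Fin n → Polynomial ℂ) (i₁ : Fin n) (hc : c i₁ ≠ 0) :
    ∃ i₀ : Fin n, c i₀ ≠ 0 ∧
      vheight n (fun jj => ∑ i, c i * r i jj)
        = ((n * (c i₀).natDegree + hnat i₀ : ℕ) : WithBot ℕ) ∧
      ∀ i, c i ≠ 0 → n * (c i).natDegree + hnat i ≤ n * (c i₀).natDegree + hnat i₀ := by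
  classical
  set F := Finset.univ.filter (fun i : Fin n => c i ≠ 0) with hF
  have hFne : F.Nonempty := ⟨i₁, by simp [hF, hc]⟩
  set v : Fin n → ℕ := fun i => n * (c i).natDegree + hnat i with hvdef
  obtain ⟨i₀, hi₀F, hi₀max⟩ := Finset.exists_max_image F v hFne
  have hci₀ : c i₀ ≠ 0 := by simpa [hF] using hi₀F
  have hstrict : ∀ i ∈ F, i ≠ i₀ → v i < v i₀ := by
    intro i hiF hne
    refine lt_of_le_of_ne (hi₀max i hiF) ?_
    intro he
    apply hne
    apply hres
    have h1 : v i % n = hnat i % n := by simp [hvdef, Nat.mul_add_mod]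
    have h2 : v i₀ % n = hnat i₀ % n := by simp [hvdef, Nat.mul_add_mod]
    rw [← h1, ← h2, he]
  have hsplit : (fun jj => ∑ i, c i * r i jj)
      = fun jj => c i₀ * r i₀ jj + ∑ i ∈ Finset.univ.erase i₀, c i * r i jj := by
    funext jj
    exact (Finset.add_sum_erase _ (fun i => c i * r i jj) (Finset.mem_univ i₀)).symm
  have hfirst : vheight n (fun jj => c i₀ * r i₀ jj) = ((v i₀ : ℕ) : WithBot ℕ) := by
    rw [vheight_polymul hn hci₀ (r i₀), hv i₀, hvdef]
    push_cast
    ring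
  have hrest : vheight n (fun jj => ∑ i ∈ Finset.univ.erase i₀, c i * r i jj)
      < ((v i₀ : ℕ) : WithBot ℕ) := by
    refine lt_of_le_of_lt (vheight_finsum_le hn _ _) ?_
    rw [Finset.sup_lt_iff (WithBot.bot_lt_coe _)]
    intro i hi
    by_cases hci : c i = 0
    · have : (fun jj => c i * r i jj) = (0 : Fin n → Polynomial ℂ) := by
        funext jj; rw [hci, zero_mul]; rfl
      rw [this, (vheight_eq_bot_iff hn 0).mpr rfl]
      exact WithBot.bot_lt_coe _
    · have : vheight n (fun jj => c i * r i jj) = ((v i : ℕ) : WithBot ℕ) := by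
        rw [vheight_polymul hn hci (r i), hv i, hvdef]
        push_cast; ring
      rw [this]
      have : v i < v i₀ := hstrict i (by simp [hF, hci]) (Finset.ne_of_mem_erase hi)
      exact_mod_cast this
  refine ⟨i₀, hci₀, ?_, fun i hci => hi₀max i (by simp [hF, hci])⟩
  rw [hsplit]
  rw [vheight_add_eq_left hn (by rw [hfirst]; exact hrest), hfirst]

section Interp

variable {N : ℕ} {z : Fin N → ℂ} {α : Fin N → Fin n → ℂ}

lemma Smem_polymul {s : Fin n → Polynomial ℂ} (hs : s ∈ interpSet z α) (p : Polynomial ℂ) :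
    (fun jj => p * s jj) ∈ interpSet z α := by
  intro k
  have := hs k
  simp only [eval_mul]
  calc ∑ j, α k j * (p.eval (z k) * (s j).eval (z k))
      = p.eval (z k) * ∑ j, α k j * (s j).eval (z k) := by
        rw [Finset.mul_sum]; congr 1; funext j; ring
    _ = 0 := by rw [this, mul_zero]

lemma Smem_sub {s t : Fin n → Polynomial ℂ} (hs : s ∈ interpSet z α) (ht : t ∈ interpSet z α) :
    (fun jj => s jj - t jj) ∈ interpSet z α := by
  intro k
  have h1 := hs k
  have h2 := ht k
  simp only [eval_sub]
  calc ∑ j, α k j * ((s j).eval (z k) - (t j).eval (z k))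
      = (∑ j, α k j * (s j).eval (z k)) - ∑ j, α k j * (t j).eval (z k) := by
        rw [← Finset.sum_sub_distrib]; congr 1; funext j; ring
    _ = 0 := by rw [h1, h2, sub_zero]

end Interp

section Spans

variable {r : Fin n → Fin n → Polynomial ℂ}

lemma prevSpan_mono {i j : Fin n} (hij : i ≤ j) : prevSpan r i ⊆ prevSpan r j := by
  rintro s ⟨c, rfl⟩
  refine ⟨fun i' => if i' < i then c i' else 0, ?_⟩
  funext jj
  rw [Finset.sum_filter, Finset.sum_filter]
  congr 1
  funext i'
  by_cases h1 : i' < i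
  · simp only [if_pos h1, if_pos (lt_of_lt_of_le h1 hij)]
  · simp only [if_neg h1]
    by_cases h2 : i' < j
    · simp only [if_pos h2, zero_mul]
    · simp only [if_neg h2]

lemma prevSpan_single {i j : Fin n} (hij : i < j) (p : Polynomial ℂ) :
    (fun jj => p * r i jj) ∈ prevSpan r j := by
  refine ⟨fun i' => if i' = i then p else 0, ?_⟩
  funext jj
  rw [Finset.sum_eq_single_of_mem i (by simp [hij])]
  · simp
  · intro b _ hb
    simp only [if_neg hb, zero_mul]

lemma prevSpan_add_mem {a b : Fin n → Polynomial ℂ} {j : Fin n}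
    (ha : a ∈ prevSpan r j) (hb : b ∈ prevSpan r j) :
    (fun jj => a jj + b jj) ∈ prevSpan r j := by
  obtain ⟨ca, rfl⟩ := ha
  obtain ⟨cb, rfl⟩ := hb
  refine ⟨fun i => ca i + cb i, ?_⟩
  funext jj
  rw [← Finset.sum_add_distrib]
  congr 1
  funext i
  ring

end Spans

lemma mod_sub_helper {a b : ℕ} (hn : 0 < n) (h : a % n = b % n) (hle : a ≤ b) :
    n * ((b - a) / n) + a = b := by
  have hd : n ∣ (b - a) := (Nat.modEq_iff_dvd' hle).mp h
  obtain ⟨t, ht⟩ := hd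
  rw [ht, Nat.mul_div_cancel_left _ hn]
  omega

section GenSeq

variable {N : ℕ} {z : Fin N → ℂ} {α : Fin N → Fin n → ℂ} {r : Fin n → Fin n → Polynomial ℂ}
variable {hnat : Fin n → ℕ}

lemma genseq_mono (hr : IsGenSeq (interpSet z α) r)
    (hv : ∀ j, vheight n (r j) = ((hnat j : ℕ) : WithBot ℕ))
    {i j : Fin n} (hij : i ≤ j) : hnat i ≤ hnat j := by
  rcases eq_or_lt_of_le hij with h | h
  · exact le_of_eq (by rw [h])
  · have hjS : r j ∈ interpSet z α := (hr j).2.1.1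
    have hjn : r j ∉ prevSpan r i := fun hmem => (hr j).2.1.2 (prevSpan_mono hij hmem)
    have := (hr i).2.2 (r j) ⟨hjS, hjn⟩ (hr j).1
    rw [hv i, hv j] at this
    exact_mod_cast this

lemma genseq_vmul (hn : 0 < n) (hr : IsGenSeq (interpSet z α) r)
    (hv : ∀ j, vheight n (r j) = ((hnat j : ℕ) : WithBot ℕ)) (j : Fin n) (t : ℕ) :
    vheight n (fun jj => Polynomial.X ^ t * r j jj)
      = ((n * t + hnat j : ℕ) : WithBot ℕ) := by
  rw [vheight_polymul hn (pow_ne_zero t Polynomial.X_ne_zero) (r j), hv j, natDegree_X_pow]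
  push_cast
  ring

lemma genseq_res_inj (hn : 0 < n) (hr : IsGenSeq (interpSet z α) r)
    (hv : ∀ j, vheight n (r j) = ((hnat j : ℕ) : WithBot ℕ)) :
    ∀ i j : Fin n, hnat i % n = hnat j % n → i = j := by
  have key : ∀ i j : Fin n, i < j → hnat i % n = hnat j % n → False := by
    intro i j hij hmod
    have hle : hnat i ≤ hnat j := genseq_mono hr hv hij.le
    set t : ℕ := (hnat j - hnat i) / n with ht
    have htt : n * t + hnat i = hnat j := mod_sub_helper hn hmod hle
    set s₂ : Fin n → Polynomial ℂ := fun jj => Polynomial.X ^ t * r i jj with hs₂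
    have hvs₂ : vheight n s₂ = ((hnat j : ℕ) : WithBot ℕ) := by
      rw [hs₂, genseq_vmul hn hr hv i t, htt]
    have hs₂ne : s₂ ≠ 0 := by
      intro h0
      rw [h0, (vheight_eq_bot_iff hn 0).mpr rfl] at hvs₂
      exact WithBot.coe_ne_bot hvs₂.symm
    obtain ⟨cc, hccne, hclt⟩ := cancel hn (hr j).1 hs₂ne (hvs₂.trans (hv j).symm)
    set w : Fin n → Polynomial ℂ := fun jj => r j jj - Polynomial.C cc * s₂ jj with hw
    have hwS : w ∈ interpSet z α := by
      rw [hw]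
      have h2 : (fun jj => (Polynomial.C cc * Polynomial.X ^ t) * r i jj) ∈ interpSet z α :=
        Smem_polymul (hr i).2.1.1 _
      have := Smem_sub (hr j).2.1.1 h2
      convert this using 2 with jj
      rw [hs₂]
      ring
    have hwmul : ∀ jj, Polynomial.C cc * s₂ jj = (Polynomial.C cc * Polynomial.X ^ t) * r i jj := by
      intro jj
      rw [hs₂]
      ring
    have hwn : w ∉ prevSpan r j := by
      intro hmem
      apply (hr j).2.1.2
      have h3 : r j = fun jj => w jj + (Polynomial.C cc * Polynomial.X ^ t) * r i jj := by
        funext jj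
        rw [hw, ← hwmul jj]
        ring
      rw [h3]
      exact prevSpan_add_mem hmem (prevSpan_single hij _)
    have hwne : w ≠ 0 := by
      intro h0
      apply (hr j).2.1.2
      have h3 : r j = fun jj => (Polynomial.C cc * Polynomial.X ^ t) * r i jj := by
        funext jj
        have := congrFun h0 jj
        rw [hw] at this
        simp only [Pi.zero_apply, sub_eq_zero] at this
        rw [← hwmul jj, this]
      rw [h3]
      exact prevSpan_single hij _
    have := (hr j).2.2 w ⟨hwS, hwn⟩ hwne
    exact absurd (lt_of_le_of_lt this hclt) (lt_irrefl _)
  intro i j hmod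
  rcases lt_trichotomy i j with h | h | h
  · exact absurd hmod (fun hm => key i j h hm)
  · exact h
  · exact absurd hmod.symm (fun hm => key j i h hm)

lemma represent (hn : 0 < n) (hr : IsGenSeq (interpSet z α) r)
    (hv : ∀ j, vheight n (r j) = ((hnat j : ℕ) : WithBot ℕ))
    (hresinj : ∀ i j : Fin n, hnat i % n = hnat j % n → i = j) :
    ∀ a : ℕ, ∀ s ∈ interpSet z α, vheight n s ≤ ((a : ℕ) : WithBot ℕ) →
      ∃ c : Fin n → Polynomial ℂ, (s = fun jj => ∑ i, c i * r i jj) ∧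
        ∀ i, c i ≠ 0 → n * (c i).natDegree + hnat i ≤ a := by
  have hrne : ∀ j, r j ≠ 0 := fun j => (hr j).1
  intro a
  induction a using Nat.strong_induction_on with
  | _ a IH =>
    intro s hsS hsa
    by_cases hs0 : s = 0
    · refine ⟨0, ?_, ?_⟩
      · funext jj
        simp [hs0]
      · intro i hci
        exact absurd rfl hci
    · obtain ⟨b, hvb⟩ : ∃ b : ℕ, vheight n s = ((b : ℕ) : WithBot ℕ) := by
        cases hvs : vheight n s with
        | bot => exact absurd ((vheight_eq_bot_iff hn s).mp hvs) hs0
        | coe b => exact ⟨b, rfl⟩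
      have hba : b ≤ a := by
        rw [hvb] at hsa
        exact_mod_cast hsa
      -- find generator with matching residue
      obtain ⟨j, hj⟩ : ∃ j : Fin n, hnat j % n = b % n := by
        set ρ : Fin n → Fin n := fun j => ⟨hnat j % n, Nat.mod_lt _ hn⟩ with hρ
        have hinj : Function.Injective ρ := by
          intro i j hij
          exact hresinj i j (by
            have := congrArg Fin.val hij
            simpa [hρ] using this)
        have hsurj : Function.Surjective ρ := Finite.surjective_of_injective hinj
        obtain ⟨j, hjj⟩ := hsurj ⟨b % n, Nat.mod_lt _ hn⟩
        exact ⟨j, by have := congrArg Fin.val hjj; simpa [hρ] using this⟩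
      -- s is not in prevSpan r j
      have hsnp : s ∉ prevSpan r j := by
        rintro ⟨c, hcs⟩
        set c' : Fin n → Polynomial ℂ := fun i => if i < j then c i else 0 with hc'
        have hseq : s = fun jj => ∑ i, c' i * r i jj := by
          rw [hcs]
          funext jj
          rw [Finset.sum_filter]
          congr 1
          funext i
          by_cases hi : i < j
          · simp only [hc', if_pos hi]
          · simp only [hc', if_neg hi, zero_mul]
        have hex : ∃ i₁, c' i₁ ≠ 0 := by
          by_contra hall
          push_neg at hall
          apply hs0
          rw [hseq]
          funext jj
          simp only [Pi.zero_apply]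
          refine Finset.sum_eq_zero fun i _ => by rw [hall i, zero_mul]
        obtain ⟨i₁, hi₁⟩ := hex
        obtain ⟨i₀, hi₀ne, hi₀v, -⟩ := combo_eq hn hrne hv hresinj c' i₁ hi₁
        rw [← hseq, hvb] at hi₀v
        have hbv : b = n * (c' i₀).natDegree + hnat i₀ := by exact_mod_cast hi₀v
        have : i₀ = j := by
          apply hresinj
          rw [hj, hbv, Nat.mul_add_mod]
        rw [this] at hi₀ne
        exact hi₀ne (by simp [hc'])
      have hjb : hnat j ≤ b := by
        have := (hr j).2.2 s ⟨hsS, hsnp⟩ hs0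
        rw [hv j, hvb] at this
        exact_mod_cast this
      set t : ℕ := (b - hnat j) / n with ht
      have htt : n * t + hnat j = b := mod_sub_helper hn hj hjb
      set s₂ : Fin n → Polynomial ℂ := fun jj => Polynomial.X ^ t * r j jj with hs₂
      have hvs₂ : vheight n s₂ = ((b : ℕ) : WithBot ℕ) := by
        rw [hs₂, genseq_vmul hn hr hv j t, htt]
      have hs₂ne : s₂ ≠ 0 := by
        intro h0
        rw [h0, (vheight_eq_bot_iff hn 0).mpr rfl] at hvs₂
        exact WithBot.coe_ne_bot hvs₂.symm
      obtain ⟨cc, hccne, hclt⟩ := cancel hn hs0 hs₂ne (hvs₂.trans hvb.symm)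
      set w : Fin n → Polynomial ℂ := fun jj => s jj - Polynomial.C cc * s₂ jj with hw
      have hwmul : ∀ jj, Polynomial.C cc * s₂ jj
          = (Polynomial.C cc * Polynomial.X ^ t) * r j jj := by
        intro jj
        rw [hs₂]
        ring
      have hwS : w ∈ interpSet z α := by
        rw [hw]
        have h2 := Smem_polymul (hr j).2.1.1 (Polynomial.C cc * Polynomial.X ^ t)
        have := Smem_sub hsS h2
        convert this using 2 with jj
        rw [hs₂]
        ring
      have hdegp : (Polynomial.C cc * Polynomial.X ^ t).natDegree = t := by
        rw [natDegree_C_mul hccne, natDegree_X_pow]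
      by_cases hw0 : w = 0
      · set c : Fin n → Polynomial ℂ :=
          fun i => if i = j then Polynomial.C cc * Polynomial.X ^ t else 0 with hc
        refine ⟨c, ?_, ?_⟩
        · funext jj
          rw [Finset.sum_eq_single_of_mem j (Finset.mem_univ j)]
          · have := congrFun hw0 jj
            rw [hw] at this
            simp only [Pi.zero_apply, sub_eq_zero] at this
            simp only [hc, if_pos rfl, if_true]
            rw [← hwmul jj, ← this]
          · intro bb _ hbb
            simp only [hc, if_neg hbb, zero_mul]
        · intro i hci
          by_cases hij : i = j
          · subst hij
            simp only [hc, if_pos rfl, if_true]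
            rw [hdegp]
            omega
          · exact absurd (by simp [hc, if_neg hij]) hci
      · obtain ⟨b', hvb'⟩ : ∃ b' : ℕ, vheight n w = ((b' : ℕ) : WithBot ℕ) := by
          cases hvs : vheight n w with
          | bot => exact absurd ((vheight_eq_bot_iff hn w).mp hvs) hw0
          | coe b' => exact ⟨b', rfl⟩
        have hb'b : b' < b := by
          rw [hvb, hvb'] at hclt
          exact_mod_cast hclt
        have hb'a : b' < a := lt_of_lt_of_le hb'b hba
        obtain ⟨c', hc'eq, hc'bd⟩ := IH b' hb'a w hwS (le_of_eq hvb')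
        set c : Fin n → Polynomial ℂ :=
          fun i => c' i + if i = j then Polynomial.C cc * Polynomial.X ^ t else 0 with hc
        refine ⟨c, ?_, ?_⟩
        · funext jj
          have hsw : s jj = w jj + (Polynomial.C cc * Polynomial.X ^ t) * r j jj := by
            rw [hw, ← hwmul jj]
            ring
          rw [hsw, congrFun hc'eq jj]
          simp only [hc, add_mul]
          rw [Finset.sum_add_distrib]
          congr 1
          rw [Finset.sum_eq_single_of_mem j (Finset.mem_univ j)]
          · simp
          · intro bb _ hbb
            simp only [if_neg hbb, zero_mul]
        · intro i hci
          by_cases hij : i = j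
          · subst hij
            simp only [hc, if_pos rfl, if_true] at hci ⊢
            have hnd : (c' i + Polynomial.C cc * Polynomial.X ^ t).natDegree
                ≤ max (c' i).natDegree t := by
              refine le_trans (natDegree_add_le _ _) ?_
              rw [hdegp]
            by_cases hc'i : c' i = 0
            · rw [hc'i, zero_add, hdegp]
              omega
            · have := hc'bd i hc'i
              have h2 : n * max (c' i).natDegree t + hnat i ≤ a := by
                rcases max_cases (c' i).natDegree t with ⟨h1, -⟩ | ⟨h1, -⟩ <;> rw [h1]
                · omega
                · omega
              calc n * (c' i + Polynomial.C cc * Polynomial.X ^ t).natDegree + hnat i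
                  ≤ n * max (c' i).natDegree t + hnat i := by
                    have := Nat.mul_le_mul_left n hnd
                    omega
                _ ≤ a := h2
          · simp only [hc, if_neg hij, add_zero] at hci ⊢
            exact le_trans (hc'bd i hci) (le_of_lt hb'a)

end GenSeq


noncomputable section EV


noncomputable def evMap (n N M : ℕ) (z : Fin N → ℂ) (α : Fin N → Fin n → ℂ) :
    (Fin n → Polynomial.degreeLT ℂ (M+1)) →ₗ[ℂ] (Fin N → ℂ) where
  toFun w := fun k => ∑ j, α k j * ((w j : Polynomial ℂ).eval (z k))
  map_add' w w' := by
    funext k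
    simp only [Pi.add_apply, Submodule.coe_add, eval_add, mul_add]
    rw [Finset.sum_add_distrib]
  map_smul' c w := by
    funext k
    simp only [Pi.smul_apply, SetLike.val_smul, RingHom.id_apply, smul_eq_mul, Finset.mul_sum]
    congr 1
    funext j
    rw [Polynomial.smul_eq_C_mul, eval_mul, eval_C]
    ring

lemma ev_surj {n N M : ℕ} (hn : 0 < n) (hNM : N ≤ M) (z : Fin N → ℂ)
    (α : Fin N → Fin n → ℂ)
    (hα_li : ∀ w : ℂ,
      LinearIndependent ℂ (fun k : {k : Fin N // z k = w} => α k.val)) :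
    Function.Surjective (evMap n N M z α) := by
  classical
  rw [← LinearMap.range_eq_top]
  by_contra hne
  obtain ⟨x, hx⟩ : ∃ x, x ∉ LinearMap.range (evMap n N M z α) := by
    by_contra hall
    push_neg at hall
    exact hne (Submodule.eq_top_iff'.mpr hall)
  obtain ⟨f, hfx, hfmap⟩ := Submodule.exists_dual_map_eq_bot_of_notMem hx inferInstance
  set c : Fin N → ℂ := fun k => f (fun l => if k = l then 1 else 0) with hc
  have hfc : ∀ y : Fin N → ℂ, f y = ∑ k, y k * c k := by
    intro y
    rw [LinearMap.pi_apply_eq_sum_univ f y]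
    simp [hc, smul_eq_mul]
  have hker : ∀ w, f (evMap n N M z α w) = 0 := by
    intro w
    have hmem : evMap n N M z α w ∈ LinearMap.range (evMap n N M z α) := ⟨w, rfl⟩
    have := Submodule.mem_map_of_mem (f := f) hmem
    rw [hfmap] at this
    simpa using this
  have hczero : ∀ k₀ : Fin N, c k₀ = 0 := by
    intro k₀
    set w₀ : ℂ := z k₀ with hw₀
    set S : Finset (Fin N) := Finset.univ.filter (fun l => z l ≠ w₀) with hS
    set Pfac : Polynomial ℂ := ∏ l ∈ S, (X - C (z l)) with hP
    have hPne : Pfac ≠ 0 := by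
      rw [hP]
      exact Finset.prod_ne_zero_iff.mpr fun l _ => X_sub_C_ne_zero (z l)
    have hPdeg : Pfac.natDegree ≤ N := by
      rw [hP, natDegree_prod _ _ (fun l _ => X_sub_C_ne_zero (z l))]
      simp only [natDegree_X_sub_C]
      calc ∑ _l ∈ S, 1 = S.card := by rw [Finset.sum_const, smul_eq_mul, mul_one]
        _ ≤ N := le_trans (Finset.card_le_univ S) (by simp)
    have hmemLT : ∀ v : ℂ, C v * Pfac ∈ degreeLT ℂ (M+1) := by
      intro v
      rw [mem_degreeLT]
      calc (C v * Pfac).degree ≤ (C v).degree + Pfac.degree := degree_mul_le _ _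
        _ ≤ 0 + Pfac.degree := add_le_add degree_C_le le_rfl
        _ = Pfac.degree := zero_add _
        _ ≤ (Pfac.natDegree : WithBot ℕ) := degree_le_natDegree
        _ < ((M+1 : ℕ) : WithBot ℕ) := by exact_mod_cast lt_of_le_of_lt hPdeg (by omega)
    have hPzero : ∀ k, z k ≠ w₀ → Pfac.eval (z k) = 0 := by
      intro k hk
      rw [hP, eval_prod]
      refine Finset.prod_eq_zero (i := k) (by simp [hS, hk]) ?_
      simp
    have hPw : Pfac.eval w₀ ≠ 0 := by
      rw [hP, eval_prod]
      refine Finset.prod_ne_zero_iff.mpr fun l hl => ?_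
      have : z l ≠ w₀ := by simpa [hS] using hl
      simp only [eval_sub, eval_X, eval_C]
      exact sub_ne_zero.mpr (Ne.symm this)
    have hkey : ∀ v : Fin n → ℂ,
        ∑ k ∈ Finset.univ.filter (fun k => z k = w₀), c k * ∑ j, α k j * v j = 0 := by
      intro v
      set Tv : Fin n → degreeLT ℂ (M+1) := fun j => ⟨C (v j) * Pfac, hmemLT (v j)⟩ with hTv
      have hEv : ∀ k, evMap n N M z α Tv k = (∑ j, α k j * v j) * Pfac.eval (z k) := by
        intro k
        show (∑ j, α k j * ((C (v j) * Pfac).eval (z k))) = _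
        rw [Finset.sum_mul]
        congr 1
        funext j
        rw [eval_mul, eval_C]
        ring
      have h0 := hker Tv
      rw [hfc] at h0
      rw [← Finset.sum_filter_add_sum_filter_not Finset.univ (fun k => z k = w₀)] at h0
      have h1 : ∑ k ∈ Finset.univ.filter (fun k => ¬ z k = w₀),
          evMap n N M z α Tv k * c k = 0 := by
        refine Finset.sum_eq_zero fun k hk => ?_
        have hzk : z k ≠ w₀ := by simpa using (Finset.mem_filter.mp hk).2
        rw [hEv k, hPzero k hzk, mul_zero, zero_mul]
      rw [h1, add_zero] at h0
      have h2 : ∑ k ∈ Finset.univ.filter (fun k => z k = w₀),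
          evMap n N M z α Tv k * c k
          = Pfac.eval w₀ * ∑ k ∈ Finset.univ.filter (fun k => z k = w₀),
              c k * ∑ j, α k j * v j := by
        rw [Finset.mul_sum]
        refine Finset.sum_congr rfl fun k hk => ?_
        have hzk : z k = w₀ := by simpa using (Finset.mem_filter.mp hk).2
        rw [hEv k, hzk]
        ring
      rw [h2] at h0
      exact (mul_eq_zero.mp h0).resolve_left hPw
    -- linear independence step
    have hcoef : ∀ j : Fin n,
        ∑ k ∈ Finset.univ.filter (fun k => z k = w₀), c k * α k j = 0 := by
      intro j
      have := hkey (fun j' => if j' = j then 1 else 0)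
      calc ∑ k ∈ Finset.univ.filter (fun k => z k = w₀), c k * α k j
          = ∑ k ∈ Finset.univ.filter (fun k => z k = w₀),
              c k * ∑ j', α k j' * (if j' = j then 1 else 0) := by
            refine Finset.sum_congr rfl fun k _ => ?_
            congr 1
            rw [Finset.sum_eq_single_of_mem j (Finset.mem_univ j)]
            · simp
            · intro b _ hb
              simp [hb]
        _ = 0 := this
    have hli := hα_li w₀
    rw [Fintype.linearIndependent_iff] at hli
    have := hli (fun k => c k.val) (by
      funext j
      simp only [Finset.sum_apply, Pi.smul_apply, smul_eq_mul, Pi.zero_apply]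
      rw [← Finset.sum_subtype (Finset.univ.filter (fun k => z k = w₀))
        (fun k => by simp) (fun k => c k * α k j)]
      exact hcoef j) ⟨k₀, rfl⟩
    exact this
  apply hfx
  rw [hfc]
  refine Finset.sum_eq_zero fun k _ => by rw [hczero k, mul_zero]


lemma key_count (hn : 0 < n) {N : ℕ} {z : Fin N → ℂ} {α : Fin N → Fin n → ℂ}
    (hα_li : ∀ w : ℂ,
      LinearIndependent ℂ (fun k : {k : Fin N // z k = w} => α k.val))
    {r : Fin n → Fin n → Polynomial ℂ} (hr : IsGenSeq (interpSet z α) r)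
    {hnat : Fin n → ℕ} (hv : ∀ j, vheight n (r j) = ((hnat j : ℕ) : WithBot ℕ))
    (hresinj : ∀ i j : Fin n, hnat i % n = hnat j % n → i = j) :
    ∑ j, hnat j / n = N := by
  classical
  have hrne : ∀ j, r j ≠ 0 := fun j => (hr j).1
  set M : ℕ := N + ∑ j, hnat j with hM
  set q : Fin n → ℕ := fun j => hnat j / n with hq
  have hqM : ∀ j, q j ≤ M := by
    intro j
    have h1 : hnat j ≤ ∑ j', hnat j' :=
      Finset.single_le_sum (f := hnat) (fun i _ => Nat.zero_le _) (Finset.mem_univ j)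
    exact le_trans (Nat.div_le_self _ _) (by omega)
  haveI : Module.Finite ℂ (degreeLT ℂ (M+1)) := Module.Finite.equiv (degreeLTEquiv ℂ (M+1)).symm
  -- the coercion map
  set ι : (Fin n → degreeLT ℂ (M+1)) →ₗ[ℂ] (Fin n → Polynomial ℂ) :=
    { toFun := fun w j => (w j : Polynomial ℂ)
      map_add' := fun w w' => by funext j; simp
      map_smul' := fun c w => by funext j; simp } with hι
  have hιinj : Function.Injective ι := by
    intro w w' h
    funext j
    exact Subtype.ext (congrFun h j)
  have hcoorddeg : ∀ (j : Fin n) (i : Fin n), (r j i).natDegree ≤ q j := by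
    intro j i
    by_cases h0 : r j i = 0
    · rw [h0, natDegree_zero]; exact Nat.zero_le _
    · have := term_le_vheight (r j) i
      rw [hv j, term_eq h0] at this
      have h2 : n * (r j i).natDegree + (i : ℕ) ≤ hnat j := by exact_mod_cast this
      rw [hq]
      rw [Nat.le_div_iff_mul_le hn]
      have hcomm : (r j i).natDegree * n = n * (r j i).natDegree := Nat.mul_comm _ _
      omega
  have memB : ∀ (j : Fin n) (d : ℕ), d ≤ M - q j → ∀ i : Fin n,
      Polynomial.X ^ d * r j i ∈ degreeLT ℂ (M+1) := by
    intro j d hd i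
    rw [mem_degreeLT]
    by_cases h0 : r j i = 0
    · rw [h0, mul_zero, degree_zero]
      exact WithBot.bot_lt_coe _
    · rw [degree_mul, degree_X_pow, degree_eq_natDegree h0]
      have h1 : d + (r j i).natDegree ≤ M := by
        have := hcoorddeg j i
        have := hqM j
        omega
      have h2 : ((d : WithBot ℕ)) + ((r j i).natDegree : WithBot ℕ)
          = ((d + (r j i).natDegree : ℕ) : WithBot ℕ) := by push_cast; ring
      rw [h2]
      exact_mod_cast Nat.lt_of_le_of_lt h1 (Nat.lt_succ_self M)
  set B : (Σ j : Fin n, Fin (M - q j + 1)) → (Fin n → degreeLT ℂ (M+1)) :=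
    fun p i => ⟨Polynomial.X ^ (p.2 : ℕ) * r p.1 i, memB p.1 p.2 (by omega) i⟩ with hB
  have hBK : ∀ p, B p ∈ LinearMap.ker (evMap n N M z α) := by
    intro p
    rw [LinearMap.mem_ker]
    funext k
    have hmem : (fun jj => Polynomial.X ^ (p.2 : ℕ) * r p.1 jj) ∈ interpSet z α :=
      Smem_polymul (hr p.1).2.1.1 _
    exact hmem k
  have hιB : ∀ p, ι (B p) = fun jj => Polynomial.X ^ (p.2 : ℕ) * r p.1 jj := fun p => rfl
  -- linear independence of B
  have hli : LinearIndependent ℂ B := by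
    apply LinearIndependent.of_comp ι
    rw [Fintype.linearIndependent_iff]
    intro g hg
    set c : Fin n → Polynomial ℂ :=
      fun j => ∑ d : Fin (M - q j + 1), Polynomial.C (g ⟨j, d⟩) * Polynomial.X ^ (d : ℕ) with hc
    have hcombo : (fun jj => ∑ j, c j * r j jj) = (0 : Fin n → Polynomial ℂ) := by
      funext jj
      have hgj := congrFun hg jj
      simp only [Finset.sum_apply, Pi.zero_apply] at hgj ⊢
      rw [← hgj]
      rw [← Finset.univ_sigma_univ, Finset.sum_sigma]
      refine Finset.sum_congr rfl fun j _ => ?_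
      rw [hc, Finset.sum_mul]
      refine Finset.sum_congr rfl fun d _ => ?_
      show Polynomial.C (g ⟨j, d⟩) * Polynomial.X ^ (d : ℕ) * r j jj
        = g ⟨j, d⟩ • (ι (B ⟨j, d⟩) jj)
      rw [hιB]
      rw [Polynomial.smul_eq_C_mul]
      ring
    have hcz : ∀ j, c j = 0 := by
      intro j
      by_contra hcj
      obtain ⟨i₀, -, hi₀v, -⟩ := combo_eq hn hrne hv hresinj c j hcj
      rw [hcombo, (vheight_eq_bot_iff hn 0).mpr rfl] at hi₀v
      exact WithBot.bot_ne_coe hi₀v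
    intro p
    obtain ⟨j, d⟩ := p
    have := congrArg (fun pp => Polynomial.coeff pp (d : ℕ)) (hcz j)
    simp only [hc, Polynomial.coeff_zero] at this
    rw [Polynomial.finset_sum_coeff] at this
    rw [Finset.sum_eq_single_of_mem d (Finset.mem_univ d)] at this
    · rw [Polynomial.coeff_C_mul, Polynomial.coeff_X_pow, if_pos rfl, mul_one] at this
      exact this
    · intro b _ hb
      rw [Polynomial.coeff_C_mul, Polynomial.coeff_X_pow,
        if_neg (fun hh => hb (Fin.ext hh.symm)), mul_zero]
  -- the kernel is spanned by B
  have hspan : LinearMap.ker (evMap n N M z α) = Submodule.span ℂ (Set.range B) := by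
    apply le_antisymm
    swap
    · rw [Submodule.span_le]
      rintro _ ⟨p, rfl⟩
      exact hBK p
    intro w hw
    set s : Fin n → Polynomial ℂ := fun jj => (w jj : Polynomial ℂ) with hs
    have hsS : s ∈ interpSet z α := by
      intro k
      have := congrFun (LinearMap.mem_ker.mp hw) k
      exact this
    have hsv : vheight n s ≤ ((n * M + n - 1 : ℕ) : WithBot ℕ) := by
      rw [vheight_le_iff]
      intro j
      by_cases h0 : s j = 0
      · rw [h0, term_bot hn]
        exact bot_le
      · rw [term_eq h0]
        have hd : (s j).natDegree < M + 1 := by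
          rw [natDegree_lt_iff_degree_lt h0]
          exact_mod_cast mem_degreeLT.mp (w j).2
        have hj : (j : ℕ) < n := j.isLt
        have := Nat.mul_le_mul_left n (Nat.lt_succ_iff.mp hd)
        have hcoe : n * (s j).natDegree + (j : ℕ) ≤ n * M + n - 1 := by omega
        exact_mod_cast hcoe
    obtain ⟨c, hceq, hcbd⟩ := represent hn hr hv hresinj (n * M + n - 1) s hsS hsv
    have hcdeg : ∀ j, (c j).natDegree < M - q j + 1 := by
      intro j
      by_cases h0 : c j = 0
      · rw [h0, natDegree_zero]; omega
      · have hbd := hcbd j h0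
        have hdm : n * q j + hnat j % n = hnat j := Nat.div_add_mod _ _
        have hmlt : hnat j % n < n := Nat.mod_lt _ hn
        have h1 : n * ((c j).natDegree + q j) < n * (M + 1) := by
          rw [Nat.mul_add, Nat.mul_add, Nat.mul_one]
          omega
        have h2 : (c j).natDegree + q j < M + 1 := Nat.lt_of_mul_lt_mul_left h1
        omega
    have hwsum : w = ∑ p : (Σ j : Fin n, Fin (M - q j + 1)),
        ((c p.1).coeff (p.2 : ℕ)) • B p := by
      apply hιinj
      rw [map_sum]
      funext jj
      have h1 : ι w jj = s jj := rfl
      rw [h1, congrFun hceq jj]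
      simp only [Finset.sum_apply]
      rw [← Finset.univ_sigma_univ, Finset.sum_sigma]
      refine Finset.sum_congr rfl fun j _ => ?_
      have h2 : c j = ∑ d : Fin (M - q j + 1),
          Polynomial.C ((c j).coeff (d : ℕ)) * Polynomial.X ^ (d : ℕ) := by
        conv_lhs => rw [Polynomial.as_sum_range' (c j) (M - q j + 1) (hcdeg j)]
        rw [← Finset.sum_range (fun d => Polynomial.C ((c j).coeff d) * Polynomial.X ^ d)]
        refine Finset.sum_congr rfl fun d _ => ?_
        rw [Polynomial.C_mul_X_pow_eq_monomial]
      rw [h2, Finset.sum_mul]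
      refine Finset.sum_congr rfl fun d _ => ?_
      show Polynomial.C ((c j).coeff (d : ℕ)) * Polynomial.X ^ (d : ℕ) * r j jj
        = (((c j).coeff (d : ℕ)) • ι (B ⟨j, d⟩)) jj
      simp only [Pi.smul_apply]
      rw [hιB]
      rw [Polynomial.smul_eq_C_mul]
      ring
    rw [hwsum]
    exact Submodule.sum_mem _ fun p _ =>
      Submodule.smul_mem _ _ (Submodule.subset_span ⟨p, rfl⟩)
  -- dimension count
  have hrank := LinearMap.finrank_range_add_finrank_ker (evMap n N M z α)
  have hrg : LinearMap.range (evMap n N M z α) = ⊤ :=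
    LinearMap.range_eq_top.mpr (ev_surj hn (by omega) z α hα_li)
  rw [hrg, finrank_top, Module.finrank_pi] at hrank
  have hW : Module.finrank ℂ (Fin n → degreeLT ℂ (M+1)) = n * (M+1) := by
    rw [Module.finrank_pi_fintype]
    have h : ∀ j : Fin n, Module.finrank ℂ (degreeLT ℂ (M+1)) = M + 1 := fun j => by
      rw [(degreeLTEquiv ℂ (M+1)).finrank_eq, Module.finrank_fin_fun]
    rw [Finset.sum_congr rfl fun j _ => h j]
    simp [Finset.sum_const, mul_comm]
  have hK : Module.finrank ℂ (LinearMap.ker (evMap n N M z α))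
      = ∑ j, (M - q j + 1) := by
    rw [hspan, finrank_span_eq_card hli]
    simp [Fintype.card_sigma]
  rw [hK, hW] at hrank
  simp only [Fintype.card_fin] at hrank
  have hsum2 : ∑ j, (M - q j + 1) + ∑ j, q j = n * (M + 1) := by
    rw [← Finset.sum_add_distrib]
    have : ∀ j : Fin n, (M - q j + 1) + q j = M + 1 := by
      intro j
      have := hqM j
      omega
    rw [Finset.sum_congr rfl fun j _ => this j]
    rw [Finset.sum_const, Finset.card_univ, Fintype.card_fin, smul_eq_mul]
  have heta : (∑ j, q j) = Finset.univ.sum q := rfl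
  have hgoal : (∑ j, hnat j / n) = ∑ j, q j := rfl
  omega

end EV

end St8

/-- Sum of heights of the generators equals Nn + n(n−1)/2. -/
theorem stmt8
    (n N : ℕ) (hn : 0 < n) (hnN : n < N)
    (z : Fin N → ℂ) (α : Fin N → Fin n → ℂ)
    (hα_ne : ∀ k, α k ≠ 0)
    (hα_col : ∀ j : Fin n, ∃ k, α k j ≠ 0)
    (hα_li : ∀ w : ℂ,
      LinearIndependent ℂ (fun k : {k : Fin N // z k = w} => α k.val))
    (r : Fin n → Fin n → Polynomial ℂ) (hr : IsGenSeq (interpSet z α) r) :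
    ∑ j : Fin n, vheight n (r j)
      = ((N * n + n * (n - 1) / 2 : ℕ) : WithBot ℕ) := by
  classical
  have hvex : ∀ j : Fin n, ∃ m : ℕ, vheight n (r j) = ((m : ℕ) : WithBot ℕ) := by
    intro j
    cases hvs : vheight n (r j) with
    | bot => exact absurd ((St8.vheight_eq_bot_iff hn (r j)).mp hvs) (hr j).1
    | coe m => exact ⟨m, rfl⟩
  choose hnat hv using hvex
  have hresinj := St8.genseq_res_inj hn hr hv
  have hqsum : ∑ j, hnat j / n = N := St8.key_count hn hα_li hr hv hresinj
  set ρ : Fin n → Fin n := fun j => ⟨hnat j % n, Nat.mod_lt _ hn⟩ with hρ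
  have hinj : Function.Injective ρ := fun i j hij => hresinj i j (by
      have := congrArg Fin.val hij; simpa [hρ] using this)
  have hbij : Function.Bijective ρ := Finite.injective_iff_bijective.mp hinj
  have hressum : ∑ j, hnat j % n = n * (n-1) / 2 := by
    have he : ∑ j, ((Equiv.ofBijective ρ hbij j : Fin n) : ℕ) = ∑ i : Fin n, (i : ℕ) :=
      Equiv.sum_comp (Equiv.ofBijective ρ hbij) (fun i : Fin n => (i : ℕ))
    have h2 : ∀ j, ((Equiv.ofBijective ρ hbij j : Fin n) : ℕ) = hnat j % n := fun j => rfl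
    rw [Finset.sum_congr rfl fun j _ => h2 j] at he
    rw [he, Fin.sum_univ_eq_sum_range (fun i => i) n, Finset.sum_range_id]
  have hsum : ∑ j, hnat j = N * n + n * (n-1) / 2 := by
    have h1 : ∀ j : Fin n, hnat j = n * (hnat j / n) + hnat j % n :=
      fun j => (Nat.div_add_mod _ _).symm
    rw [Finset.sum_congr rfl fun j _ => h1 j, Finset.sum_add_distrib, ← Finset.mul_sum,
      hqsum, hressum]
    ring
  calc ∑ j, vheight n (r j) = ∑ j, ((hnat j : ℕ) : WithBot ℕ) :=
        Finset.sum_congr rfl fun j _ => hv j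
    _ = ((∑ j, hnat j : ℕ) : WithBot ℕ) := (Nat.cast_sum _ _).symm
    _ = _ := by rw [hsum]
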